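/- Field Expansion Lemma: For a social welfare function on at least three alternatives satisfying Pareto Efficiency, IIA, and Universality, if a coalition G of voters is weakly decisive over some ordered pair (x,y) with x ≠ y, then G is decisive over every ordered pair of alternatives. -/

import Mathlib

/-- Lexicographic strict order built from a score function, tie-broken by a well-order. -/
private def lexP {V A : Type} (s : V → A → ℕ) (i : V) (a b : A) : Prop :=
  s i a < s i b ∨ (s i a = s i b ∧ WellOrderingRel a b)

private theorem lexP_sto {V A : Type} (s : V → A → ℕ) (i : V) :
    IsStrictTotalOrder A (lexP s i) := by
  have hw : IsStrictTotalOrder A (WellOrderingRel (α := A)) := inferInstance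
  refine { trichotomous := ?_, irrefl := ?_, trans := ?_ }
  · intro a b hab hba
    rcases Nat.lt_trichotomy (s i a) (s i b) with h | h | h
    · exact absurd (Or.inl h) hab
    · by_cases h1 : WellOrderingRel a b
      · exact absurd (Or.inr ⟨h, h1⟩) hab
      · by_cases h2 : WellOrderingRel b a
        · exact absurd (Or.inr ⟨h.symm, h2⟩) hba
        · exact hw.trichotomous a b h1 h2
    · exact absurd (Or.inl h) hba
  · intro a h
    rcases h with h | ⟨_, h⟩
    · exact lt_irrefl _ h
    · exact hw.irrefl a h
  · intro a b c hab hbc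
    rcases hab with h | ⟨h, hw1⟩ <;> rcases hbc with h' | ⟨h', hw2⟩
    · exact Or.inl (h.trans h')
    · exact Or.inl (h' ▸ h)
    · exact Or.inl (h ▸ h')
    · exact Or.inr ⟨h.trans h', hw.trans _ _ _ hw1 hw2⟩

private theorem lexP_le {V A : Type} {s : V → A → ℕ} {i : V} {a b : A}
    (h : lexP s i a b) : s i a ≤ s i b := by
  rcases h with h | ⟨h, _⟩
  · exact le_of_lt h
  · exact le_of_eq h

/-- Field Expansion Lemma: for a social welfare function satisfying Pareto Efficiency,
IIA and Universality over at least three alternatives, a coalition weakly decisive over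
some ordered pair `(x, y)` with `x ≠ y` is decisive over every ordered pair. -/
theorem field_expansion_lemma
    {V A : Type} [Fintype V] [Fintype A] (hA : 3 ≤ Fintype.card A)
    (f : (V → A → A → Prop) → (A → A → Prop))
    (hout : ∀ R : V → A → A → Prop,
      (∀ i, IsStrictTotalOrder A (R i)) → IsStrictTotalOrder A (f R))
    (pareto : ∀ R : V → A → A → Prop, (∀ i, IsStrictTotalOrder A (R i)) →
      ∀ x y : A, (∀ i, R i x y) → f R x y)
    (iia : ∀ R R' : V → A → A → Prop,
      (∀ i, IsStrictTotalOrder A (R i)) → (∀ i, IsStrictTotalOrder A (R' i)) →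
      ∀ x y : A, (∀ i, R i x y ↔ R' i x y) → (f R x y ↔ f R' x y))
    (G : Set V) (x y : A) (hxy : x ≠ y)
    (weaklyDecisive : ∀ R : V → A → A → Prop, (∀ i, IsStrictTotalOrder A (R i)) →
      (∀ i ∈ G, R i x y) → (∀ i ∉ G, R i y x) → f R x y) :
    ∀ a b : A, a ≠ b →
      ∀ R : V → A → A → Prop, (∀ i, IsStrictTotalOrder A (R i)) →
        (∀ i ∈ G, R i a b) → f R a b := by
  classical
  -- Local notions of weak decisiveness and decisiveness for the fixed coalition G.
  let WD : A → A → Prop := fun p q => ∀ R : V → A → A → Prop,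
    (∀ i, IsStrictTotalOrder A (R i)) →
    (∀ i ∈ G, R i p q) → (∀ i ∉ G, R i q p) → f R p q
  let Dec : A → A → Prop := fun p q => ∀ R : V → A → A → Prop,
    (∀ i, IsStrictTotalOrder A (R i)) → (∀ i ∈ G, R i p q) → f R p q
  have toWD : ∀ p q : A, Dec p q → WD p q := fun p q h R hR hG _ => h R hR hG
  have exists_third : ∀ p q : A, ∃ r : A, r ≠ p ∧ r ≠ q := by
    intro p q
    by_contra h
    push_neg at h
    have hsub : (Finset.univ : Finset A) ⊆ {p, q} := by
      intro a _
      by_cases hap : a = p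
      · simp [hap]
      · simp [h a hap]
    have := Finset.card_le_card hsub
    have h2 : ({p, q} : Finset A).card ≤ 2 :=
      le_trans (Finset.card_insert_le _ _) (by simp)
    simp [Finset.card_univ] at this
    omega
  -- Step A: WD p q implies Dec p r for any third alternative r.
  have stepA : ∀ p q r : A, p ≠ q → r ≠ p → r ≠ q → WD p q → Dec p r := by
    intro p q r hpq hrp hrq wd R hR hG
    set s : V → A → ℕ := fun i a =>
      if i ∈ G then (if a = p then 0 else if a = q then 1 else if a = r then 2 else 3)
      else (if a = q then 0 else if a = p then (if R i p r then 1 else 2)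
            else if a = r then (if R i p r then 2 else 1) else 3) with hs
    have hR' := lexP_sto s
    have sp : ∀ i ∈ G, s i p = 0 := fun i hi => by simp [hs, hi]
    have sq : ∀ i ∈ G, s i q = 1 := fun i hi => by simp [hs, hi, Ne.symm hpq]
    have sr : ∀ i ∈ G, s i r = 2 := fun i hi => by simp [hs, hi, hrp, hrq]
    have sq' : ∀ i ∉ G, s i q = 0 := fun i hi => by simp [hs, hi]
    have sp' : ∀ i ∉ G, s i p = (if R i p r then 1 else 2) := fun i hi => by
      simp [hs, hi, hpq]
    have sr' : ∀ i ∉ G, s i r = (if R i p r then 2 else 1) := fun i hi => by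
      simp [hs, hi, hrp, hrq]
    -- everyone prefers q to r
    have h1 : f (lexP s) q r := by
      apply pareto _ hR'
      intro i
      by_cases hi : i ∈ G
      · exact Or.inl (by rw [sq i hi, sr i hi]; norm_num)
      · refine Or.inl ?_
        rw [sq' i hi, sr' i hi]; split_ifs <;> omega
    -- weak decisiveness gives p over q
    have h2 : f (lexP s) p q := by
      apply wd _ hR'
      · intro i hi
        exact Or.inl (by rw [sp i hi, sq i hi]; norm_num)
      · intro i hi
        refine Or.inl ?_
        rw [sq' i hi, sp' i hi]; split_ifs <;> omega
    have h3 : f (lexP s) p r := (hout _ hR').toIsStrictOrder.toIsTrans.trans p q r h2 h1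
    refine (iia R (lexP s) hR hR' p r ?_).mpr h3
    intro i
    by_cases hi : i ∈ G
    · constructor
      · intro _
        exact Or.inl (by rw [sp i hi, sr i hi]; norm_num)
      · intro _; exact hG i hi
    · constructor
      · intro h
        refine Or.inl ?_
        rw [sp' i hi, sr' i hi]; simp [h]
      · intro h'
        by_contra hc
        have := lexP_le h'
        rw [sp' i hi, sr' i hi] at this
        simp [hc] at this
  -- Step B: WD p q implies Dec r q for any third alternative r.
  have stepB : ∀ p q r : A, p ≠ q → r ≠ p → r ≠ q → WD p q → Dec r q := by
    intro p q r hpq hrp hrq wd R hR hG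
    set s : V → A → ℕ := fun i a =>
      if i ∈ G then (if a = r then 0 else if a = p then 1 else if a = q then 2 else 3)
      else (if a = p then 3 else if a = r then (if R i r q then 0 else 1)
            else if a = q then (if R i r q then 1 else 0) else 2) with hs
    have hR' := lexP_sto s
    have sr : ∀ i ∈ G, s i r = 0 := fun i hi => by simp [hs, hi]
    have sp : ∀ i ∈ G, s i p = 1 := fun i hi => by simp [hs, hi, Ne.symm hrp]
    have sq : ∀ i ∈ G, s i q = 2 := fun i hi => by simp [hs, hi, Ne.symm hrq, Ne.symm hpq]
    have sp' : ∀ i ∉ G, s i p = 3 := fun i hi => by simp [hs, hi]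
    have sr' : ∀ i ∉ G, s i r = (if R i r q then 0 else 1) := fun i hi => by
      simp [hs, hi, hrp]
    have sq' : ∀ i ∉ G, s i q = (if R i r q then 1 else 0) := fun i hi => by
      simp [hs, hi, Ne.symm hpq, Ne.symm hrq]
    -- everyone prefers r to p
    have h1 : f (lexP s) r p := by
      apply pareto _ hR'
      intro i
      by_cases hi : i ∈ G
      · exact Or.inl (by rw [sr i hi, sp i hi]; norm_num)
      · refine Or.inl ?_
        rw [sr' i hi, sp' i hi]; split_ifs <;> omega
    -- weak decisiveness gives p over q
    have h2 : f (lexP s) p q := by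
      apply wd _ hR'
      · intro i hi
        exact Or.inl (by rw [sp i hi, sq i hi]; norm_num)
      · intro i hi
        refine Or.inl ?_
        rw [sq' i hi, sp' i hi]; split_ifs <;> omega
    have h3 : f (lexP s) r q := (hout _ hR').toIsStrictOrder.toIsTrans.trans r p q h1 h2
    refine (iia R (lexP s) hR hR' r q ?_).mpr h3
    intro i
    by_cases hi : i ∈ G
    · constructor
      · intro _
        exact Or.inl (by rw [sr i hi, sq i hi]; norm_num)
      · intro _; exact hG i hi
    · constructor
      · intro h
        refine Or.inl ?_
        rw [sr' i hi, sq' i hi]; simp [h]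
      · intro h'
        by_contra hc
        have := lexP_le h'
        rw [sr' i hi, sq' i hi] at this
        simp [hc] at this
  -- Assemble.
  have wd0 : WD x y := weaklyDecisive
  obtain ⟨z, hzx, hzy⟩ := exists_third x y
  have dxz : Dec x z := stepA x y z hxy hzx hzy wd0
  have dzy : Dec z y := stepB x y z hxy hzx hzy wd0
  have dzx : Dec z x := stepA z y x hzy (Ne.symm hzx) hxy (toWD _ _ dzy)
  have dxy : Dec x y := stepB z y x hzy (Ne.symm hzx) hxy (toWD _ _ dzy)
  have dyx : Dec y x := stepB z x y hzx (Ne.symm hzy) (Ne.symm hxy) (toWD _ _ dzx)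
  have main : ∀ a b : A, a ≠ b → Dec a b := by
    intro a b hab
    by_cases hax : a = x
    · subst hax
      by_cases hby : b = y
      · subst hby; exact dxy
      · exact stepA a y b hxy (Ne.symm hab) hby wd0
    · by_cases hay : a = y
      · subst hay
        by_cases hbx : b = x
        · subst hbx; exact dyx
        · exact stepA a x b (Ne.symm hxy) (Ne.symm hab) hbx (toWD _ _ dyx)
      · have day : Dec a y := stepB x y a hxy hax hay wd0
        by_cases hby : b = y
        · subst hby; exact day
        · exact stepA a y b hay (Ne.symm hab) hby (toWD _ _ day)
  exact fun a b hab => main a b hab
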